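/- Let e be a vital edge and C(e) a mincut for e. Then deleting all edges that enter C(e) (tail outside, head inside) does not change the capacity of the minimum (s,t)-cut. -/
import Mathlib


open Finset

variable {V : Type*} [Fintype V] [DecidableEq V]

/-- capacity of the cut given by the source-side vertex set `C`:
total capacity of edges with tail in `C` and head outside `C`. -/
noncomputable def cutCap (E : Finset (V × V)) (w : V × V → ℝ) (C : Finset V) : ℝ :=
  ∑ e ∈ E.filter (fun e => e.1 ∈ C ∧ e.2 ∉ C), w e

/-- `C` is an (s,t)-cut. -/
def IsCut (s t : V) (C : Finset V) : Prop := s ∈ C ∧ t ∉ C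

/-- edge `e` is a contributing (outgoing) edge of the cut `C`. -/
def Contributes (e : V × V) (C : Finset V) : Prop := e.1 ∈ C ∧ e.2 ∉ C

/-- `f` is a feasible (s,t)-flow on edge set `E` with capacities `w`. -/
structure IsFlow (E : Finset (V × V)) (w : V × V → ℝ) (s t : V) (f : V × V → ℝ) : Prop where
  nonneg : ∀ e ∈ E, 0 ≤ f e
  le_cap : ∀ e ∈ E, f e ≤ w e
  support : ∀ e, e ∉ E → f e = 0
  conserve : ∀ v, v ≠ s → v ≠ t →
    ∑ e ∈ E.filter (fun e => e.1 = v), f e = ∑ e ∈ E.filter (fun e => e.2 = v), f e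

/-- value of an (s,t)-flow: the net flow out of `s`. -/
noncomputable def flowValue (E : Finset (V × V)) (s : V) (f : V × V → ℝ) : ℝ :=
  ∑ e ∈ E.filter (fun e => e.1 = s), f e - ∑ e ∈ E.filter (fun e => e.2 = s), f e

/-- `f` is a maximum (s,t)-flow. -/
def IsMaxFlow (E : Finset (V × V)) (w : V × V → ℝ) (s t : V) (f : V × V → ℝ) : Prop :=
  IsFlow E w s t f ∧ ∀ g, IsFlow E w s t g → flowValue E s g ≤ flowValue E s f

/-- capacity of a minimum (s,t)-cut. -/
noncomputable def minCutCap (E : Finset (V × V)) (w : V × V → ℝ) (s t : V) : ℝ :=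
  sInf {x | ∃ C : Finset V, IsCut s t C ∧ cutCap E w C = x}

/-- `e` is a vital edge: deleting it strictly decreases the min (s,t)-cut capacity. -/
def Vital (E : Finset (V × V)) (w : V × V → ℝ) (s t : V) (e : V × V) : Prop :=
  e ∈ E ∧ minCutCap (E.erase e) w s t < minCutCap E w s t

/-- `C` is a mincut for the edge `e`: a least-capacity (s,t)-cut in which `e` contributes. -/
def IsMincutFor (E : Finset (V × V)) (w : V × V → ℝ) (s t : V) (e : V × V)
    (C : Finset V) : Prop :=
  IsCut s t C ∧ Contributes e C ∧
    ∀ C', IsCut s t C' → Contributes e C' → cutCap E w C ≤ cutCap E w C'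

/-- total flow on edges leaving the cut `C`. -/
noncomputable def flowOut (E : Finset (V × V)) (f : V × V → ℝ) (C : Finset V) : ℝ :=
  ∑ e ∈ E.filter (fun e => e.1 ∈ C ∧ e.2 ∉ C), f e

/-- total flow on edges entering the cut `C`. -/
noncomputable def flowIn (E : Finset (V × V)) (f : V × V → ℝ) (C : Finset V) : ℝ :=
  ∑ e ∈ E.filter (fun e => e.1 ∉ C ∧ e.2 ∈ C), f e

section Helpers

variable {E : Finset (V × V)} {w : V × V → ℝ} {s t : V}

lemma cutCap_nonneg' (hpos : ∀ g ∈ E, 0 < w g) (C : Finset V) : 0 ≤ cutCap E w C :=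
  Finset.sum_nonneg fun g hg => (hpos g (Finset.mem_filter.mp hg).1).le

lemma bddBelow_cutSet' (hpos : ∀ g ∈ E, 0 < w g) :
    BddBelow {x | ∃ C : Finset V, IsCut s t C ∧ cutCap E w C = x} :=
  ⟨0, by rintro x ⟨C, _, rfl⟩; exact cutCap_nonneg' hpos C⟩

lemma minCutCap_le' (hpos : ∀ g ∈ E, 0 < w g) {C : Finset V} (hC : IsCut s t C) :
    minCutCap E w s t ≤ cutCap E w C :=
  csInf_le (bddBelow_cutSet' hpos) ⟨C, hC, rfl⟩

lemma cutCap_eq_sum (E : Finset (V × V)) (w : V × V → ℝ) (C : Finset V) :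
    cutCap E w C = ∑ g ∈ E, if g.1 ∈ C ∧ g.2 ∉ C then w g else 0 := by
  rw [cutCap, Finset.sum_filter]

end Helpers

/-- deleting all edges entering a mincut for a vital edge does not change the
capacity of the minimum (s,t)-cut. -/
theorem removing_incoming_edges_preserves_minCutCap (E : Finset (V × V)) (w : V × V → ℝ)
    (s t : V) (hst : s ≠ t) (hpos : ∀ e ∈ E, 0 < w e) (e : V × V)
    (hvit : Vital E w s t e) (C : Finset V) (hC : IsMincutFor E w s t e C) :
    minCutCap (E.filter (fun e' => ¬ (e'.1 ∉ C ∧ e'.2 ∈ C))) w s t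
      = minCutCap E w s t := by
  classical
  obtain ⟨heE, hlt⟩ := hvit
  obtain ⟨⟨hsC, htC⟩, ⟨he1C, he2C⟩, hmin⟩ := hC
  have hE'sub : ∀ p : (V × V) → Prop, ∀ inst : DecidablePred p,
      ∀ D : Finset V, cutCap (E.filter p) w D ≤ cutCap E w D := by
    intro p inst D
    rw [cutCap, cutCap]
    apply Finset.sum_le_sum_of_subset_of_nonneg
    · intro g hg
      simp only [Finset.mem_filter] at hg ⊢
      exact ⟨hg.1.1, hg.2⟩
    · intro g hg _
      exact (hpos g (Finset.mem_filter.mp hg).1).le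
  -- relation between cutCap on `E.erase e` and on `E`
  have herase : ∀ D : Finset V, Contributes e D →
      cutCap E w D = cutCap (E.erase e) w D + w e := by
    intro D hD
    rw [cutCap, cutCap, Finset.filter_erase,
      Finset.sum_erase_eq_sub (Finset.mem_filter.mpr ⟨heE, hD⟩)]
    ring
  have herase' : ∀ D : Finset V, ¬ Contributes e D →
      cutCap (E.erase e) w D = cutCap E w D := by
    intro D hD
    rw [cutCap, cutCap, Finset.filter_erase, Finset.erase_eq_of_notMem]
    intro hmem
    exact hD (Finset.mem_filter.mp hmem).2
  -- from vitality: cutCap E w C ≤ minCutCap E w s t + w e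
  have hCle : cutCap E w C ≤ minCutCap E w s t + w e := by
    have hne : {x | ∃ D : Finset V, IsCut s t D ∧ cutCap (E.erase e) w D = x}.Nonempty :=
      ⟨_, C, ⟨hsC, htC⟩, rfl⟩
    obtain ⟨x, ⟨D0, hD0, hx⟩, hxlt⟩ := exists_lt_of_csInf_lt hne hlt
    by_cases hcon : Contributes e D0
    · have h1 : cutCap E w C ≤ cutCap E w D0 := hmin D0 hD0 hcon
      have h2 := herase D0 hcon
      rw [hx] at h2
      linarith
    · exfalso
      have h3 : minCutCap E w s t ≤ cutCap E w D0 := minCutCap_le' hpos hD0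
      rw [← herase' D0 hcon, hx] at h3
      linarith
  -- key submodularity-type inequality
  have key : ∀ D : Finset V,
      cutCap E w (D ∩ C) + cutCap E w (D ∪ C) +
        (if e.1 ∉ D ∧ e.2 ∈ D then w e else 0) ≤
      cutCap (E.filter (fun e' => ¬ (e'.1 ∉ C ∧ e'.2 ∈ C))) w D + cutCap E w C := by
    intro D
    rw [cutCap_eq_sum, cutCap_eq_sum, cutCap_eq_sum E w C, cutCap, Finset.filter_filter,
      Finset.sum_filter]
    have hextra : (if e.1 ∉ D ∧ e.2 ∈ D then w e else 0) =
        ∑ g ∈ E, if g = e then (if g.1 ∉ D ∧ g.2 ∈ D then w g else 0) else 0 := by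
      rw [Finset.sum_ite_eq' E e (fun g => if g.1 ∉ D ∧ g.2 ∈ D then w g else 0), if_pos heE]
    rw [hextra, ← Finset.sum_add_distrib, ← Finset.sum_add_distrib, ← Finset.sum_add_distrib]
    apply Finset.sum_le_sum
    intro g hg
    have hw : (0:ℝ) ≤ w g := (hpos g hg).le
    by_cases h5 : g = e
    · subst h5
      by_cases h3 : g.1 ∈ D <;> by_cases h4 : g.2 ∈ D <;>
        simp [Finset.mem_inter, Finset.mem_union, he1C, he2C, h3, h4] <;> linarith
    · by_cases h1 : g.1 ∈ C <;> by_cases h2 : g.2 ∈ C <;>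
        by_cases h3 : g.1 ∈ D <;> by_cases h4 : g.2 ∈ D <;>
        simp [Finset.mem_inter, Finset.mem_union, h1, h2, h3, h4, h5] <;> linarith
  apply le_antisymm
  · -- filtered min cut ≤ original min cut
    refine le_csInf ?_ ?_
    · exact ⟨_, C, ⟨hsC, htC⟩, rfl⟩
    rintro x ⟨D, hD, rfl⟩
    calc minCutCap (E.filter (fun e' => ¬ (e'.1 ∉ C ∧ e'.2 ∈ C))) w s t
        ≤ cutCap (E.filter (fun e' => ¬ (e'.1 ∉ C ∧ e'.2 ∈ C))) w D := by
          apply minCutCap_le' _ hD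
          intro g hg
          exact hpos g (Finset.mem_filter.mp hg).1
      _ ≤ cutCap E w D := hE'sub _ _ D
  · -- original min cut ≤ filtered min cut
    refine le_csInf ?_ ?_
    · exact ⟨_, C, ⟨hsC, htC⟩, rfl⟩
    rintro x ⟨D, ⟨hsD, htD⟩, rfl⟩
    have hA : minCutCap E w s t ≤ cutCap E w (D ∩ C) :=
      minCutCap_le' hpos ⟨Finset.mem_inter.mpr ⟨hsD, hsC⟩, fun h => htD (Finset.mem_inter.mp h).1⟩
    have hB : minCutCap E w s t ≤ cutCap E w (D ∪ C) :=
      minCutCap_le' hpos ⟨Finset.mem_union_left _ hsD,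
        fun h => (Finset.mem_union.mp h).elim htD htC⟩
    have hkey := key D
    by_cases h2 : e.2 ∈ D
    · by_cases h1 : e.1 ∈ D
      · -- e contributes to D ∩ C
        have hCA : cutCap E w C ≤ cutCap E w (D ∩ C) :=
          hmin _ ⟨Finset.mem_inter.mpr ⟨hsD, hsC⟩, fun h => htD (Finset.mem_inter.mp h).1⟩
            ⟨Finset.mem_inter.mpr ⟨h1, he1C⟩, fun h => he2C (Finset.mem_inter.mp h).2⟩
        have h0 : (0:ℝ) ≤ if e.1 ∉ D ∧ e.2 ∈ D then w e else 0 := by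
          split_ifs with h
          · exact (hpos e heE).le
          · exact le_rfl
        linarith
      · -- the incoming-edge case: use vitality bound
        rw [if_pos ⟨h1, h2⟩] at hkey
        linarith
    · -- e contributes to D ∪ C
      have hCB : cutCap E w C ≤ cutCap E w (D ∪ C) :=
        hmin _ ⟨Finset.mem_union_left _ hsD, fun h => (Finset.mem_union.mp h).elim htD htC⟩
          ⟨Finset.mem_union_right _ he1C, fun h => (Finset.mem_union.mp h).elim h2 he2C⟩
      have h0 : (0:ℝ) ≤ if e.1 ∉ D ∧ e.2 ∈ D then w e else 0 := by
        split_ifs with h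
        · exact (hpos e heE).le
        · exact le_rfl
      linarith
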